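/- arXiv:1412.0716 — 2 statements merged into one kernel-verified Lean document; each statement's English description precedes it below -/
import Mathlib

section
/- If Z is a sequence in the unit disk with bounded density (every pseudohyperbolic disk of radius 1/2 contains at most N points of Z counting multiplicity), then Σ_{a∈Z} (1−|a|²)² < ∞. -/
open Metric

/-- The pseudohyperbolic metric `ψ(z,w) = |(z-w)/(1-w̄z)|`. -/
noncomputable def psh (z w : ℂ) : ℝ :=
  ‖(z - w) / (1 - (starRingEnd ℂ) w * z)‖

open MeasureTheory ENNReal in
theorem stmt10 (Z : ℕ → ℂ) (hZ : ∀ n, Z n ∈ ball (0:ℂ) 1) (N : ℕ)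
    (hden : ∀ w ∈ ball (0:ℂ) 1,
      {n : ℕ | psh (Z n) w < 1/2}.Finite ∧ {n : ℕ | psh (Z n) w < 1/2}.ncard ≤ N) :
    Summable (fun n => (1 - ‖Z n‖ ^ 2) ^ 2) := by
  set t : ℕ → ℝ := fun n => 1 - ‖Z n‖ ^ 2 with ht
  have habs : ∀ n, ‖Z n‖ < 1 := by
    intro n; simpa [Complex.dist_eq] using hZ n
  have htpos : ∀ n, 0 < t n := by
    intro n
    have h1 := habs n
    have h2 := norm_nonneg (Z n)
    simp only [ht]
    nlinarith
  set S : ℕ → Set ℂ := fun n => Metric.ball (Z n) (t n / 8) with hS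
  -- S n ⊆ ball 0 1
  have hSball : ∀ n, S n ⊆ ball (0:ℂ) 1 := by
    intro n w hw
    simp only [hS, mem_ball, Complex.dist_eq] at hw ⊢
    have h1 : ‖w - 0‖ ≤ ‖w - Z n‖ + ‖Z n‖ := by
      simpa using norm_add_le (w - Z n) (Z n)
    have h2 := habs n
    have h3 := norm_nonneg (Z n)
    simp only [ht] at hw
    nlinarith
  -- psh bound
  have hpsh : ∀ n, ∀ w ∈ S n, psh (Z n) w < 1/2 := by
    intro n w hw
    simp only [hS, mem_ball, Complex.dist_eq] at hw
    have h2 := habs n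
    have h3 := norm_nonneg (Z n)
    have hnum : ‖Z n - w‖ < t n / 8 := by
      rw [show Z n - w = -(w - Z n) by ring, norm_neg]; exact hw
    have hden' : (7/8) * t n ≤ ‖1 - (starRingEnd ℂ) w * Z n‖ := by
      have key : (1 : ℂ) - (starRingEnd ℂ) w * Z n
          = (1 - (starRingEnd ℂ) (Z n) * Z n) + (starRingEnd ℂ) (Z n - w) * Z n := by
        ring_nf
        simp [map_sub]
        ring
      have habs1 : ‖1 - (starRingEnd ℂ) (Z n) * Z n‖ = t n := by
        have h5 : (starRingEnd ℂ) (Z n) * Z n = ((‖Z n‖ ^ 2 : ℝ) : ℂ) := by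
          rw [mul_comm, Complex.mul_conj, Complex.normSq_eq_norm_sq]
        rw [h5, ← Complex.ofReal_one, ← Complex.ofReal_sub, Complex.norm_real, Real.norm_eq_abs,
          abs_of_pos (htpos n)]
      have h4 : ‖(starRingEnd ℂ) (Z n - w) * Z n‖ ≤ t n / 8 := by
        rw [norm_mul, Complex.norm_conj]
        calc ‖Z n - w‖ * ‖Z n‖ ≤ ‖Z n - w‖ * 1 := by
              apply mul_le_mul_of_nonneg_left h2.le (norm_nonneg _)
          _ ≤ t n / 8 := by rw [mul_one]; exact hnum.le
      calc (7/8) * t n = t n - t n / 8 := by ring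
        _ ≤ ‖1 - (starRingEnd ℂ) (Z n) * Z n‖
            - ‖(starRingEnd ℂ) (Z n - w) * Z n‖ := by rw [habs1]; linarith
        _ ≤ ‖1 - (starRingEnd ℂ) w * Z n‖ := by
            rw [key]
            set A := (1 : ℂ) - (starRingEnd ℂ) (Z n) * Z n
            set B := (starRingEnd ℂ) (Z n - w) * Z n
            have h6 : ‖A‖ ≤ ‖A + B‖ + ‖B‖ := by
              calc ‖A‖ = ‖A + B + -B‖ := by ring_nf
                _ ≤ ‖A + B‖ + ‖-B‖ := norm_add_le _ _
                _ = ‖A + B‖ + ‖B‖ := by rw [norm_neg]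
            linarith
    have hdpos : 0 < ‖1 - (starRingEnd ℂ) w * Z n‖ :=
      lt_of_lt_of_le (by nlinarith [htpos n]) hden'
    rw [psh, norm_div, div_lt_iff₀ hdpos]
    have := htpos n
    nlinarith
  -- pointwise overlap bound
  have hover : ∀ w : ℂ, (∑' n, (S n).indicator (fun _ => (1:ℝ≥0∞)) w)
      ≤ (ball (0:ℂ) 1).indicator (fun _ => (N:ℝ≥0∞)) w := by
    intro w
    by_cases hw : w ∈ ball (0:ℂ) 1
    · obtain ⟨hfin, hcard⟩ := hden w hw
      rw [Set.indicator_of_mem hw]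
      have hsub : ∀ n, w ∈ S n → n ∈ {n : ℕ | psh (Z n) w < 1/2} := fun n hn => hpsh n w hn
      rw [tsum_eq_sum (s := hfin.toFinset) (by
        intro n hn
        rw [Set.Finite.mem_toFinset] at hn
        exact Set.indicator_of_notMem (fun hmem => hn (hsub n hmem)) _)]
      calc ∑ n ∈ hfin.toFinset, (S n).indicator (fun _ => (1:ℝ≥0∞)) w
          ≤ ∑ _n ∈ hfin.toFinset, 1 := by
            apply Finset.sum_le_sum
            intro n _
            exact Set.indicator_le_self' (fun _ _ => zero_le_one) w
        _ = (hfin.toFinset.card : ℝ≥0∞) := by simp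
        _ ≤ (N : ℝ≥0∞) := by
            rw [Nat.cast_le]
            rwa [Set.ncard_eq_toFinset_card _ hfin] at hcard
    · rw [Set.indicator_of_notMem hw]
      have : ∀ n, (S n).indicator (fun _ => (1:ℝ≥0∞)) w = 0 := fun n =>
        Set.indicator_of_notMem (fun hmem => hw (hSball n hmem)) _
      simp [this]
  -- total measure bound
  have hmeas : ∀ n, Measurable ((S n).indicator (fun _ => (1:ℝ≥0∞))) := fun n =>
    measurable_const.indicator measurableSet_ball
  have hsum : ∑' n, volume (S n) ≤ (N : ℝ≥0∞) * volume (ball (0:ℂ) 1) := by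
    calc ∑' n, volume (S n) = ∑' n, ∫⁻ w, (S n).indicator (fun _ => (1:ℝ≥0∞)) w :=
          tsum_congr fun n => (lintegral_indicator_one measurableSet_ball).symm
      _ = ∫⁻ w, ∑' n, (S n).indicator (fun _ => (1:ℝ≥0∞)) w :=
          (lintegral_tsum (fun n => (hmeas n).aemeasurable)).symm
      _ ≤ ∫⁻ w, (ball (0:ℂ) 1).indicator (fun _ => (N:ℝ≥0∞)) w := lintegral_mono hover
      _ = (N : ℝ≥0∞) * volume (ball (0:ℂ) 1) :=
          lintegral_indicator_const measurableSet_ball _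
  have hfin : ∑' n, volume (S n) ≠ ∞ := by
    apply ne_top_of_le_ne_top _ hsum
    apply ENNReal.mul_ne_top (by simp)
    rw [Complex.volume_ball]
    exact ENNReal.mul_ne_top (by simp) ENNReal.coe_ne_top
  -- convert to the real sum
  have hvol : ∀ n, volume (S n) = ENNReal.ofReal ((t n / 8)^2) * (NNReal.pi : ℝ≥0∞) := by
    intro n
    rw [hS]
    simp only [Complex.volume_ball]
    rw [← ENNReal.ofReal_pow (div_nonneg (htpos n).le (by norm_num))]
  have key : ∑' n, ENNReal.ofReal ((t n)^2) ≠ ∞ := by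
    have heach : ∀ n, ENNReal.ofReal ((t n)^2)
        = ENNReal.ofReal 64 * ENNReal.ofReal ((t n / 8)^2) := by
      intro n
      rw [← ENNReal.ofReal_mul (by norm_num)]
      congr 1; ring
    calc ∑' n, ENNReal.ofReal ((t n)^2)
        = ENNReal.ofReal 64 * ∑' n, ENNReal.ofReal ((t n / 8)^2) := by
          rw [← ENNReal.tsum_mul_left]; exact tsum_congr heach
      _ ≠ ∞ := by
          apply ENNReal.mul_ne_top (by simp)
          intro htop
          apply hfin
          have : ∑' n, volume (S n) = (∑' n, ENNReal.ofReal ((t n / 8)^2)) * (NNReal.pi : ℝ≥0∞) := by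
            rw [← ENNReal.tsum_mul_right]; exact tsum_congr hvol
          rw [this, htop, ENNReal.top_mul]
          exact ENNReal.coe_ne_zero.mpr (by rw [← NNReal.coe_ne_zero, NNReal.coe_real_pi]; exact Real.pi_ne_zero)
  have := ENNReal.summable_toReal key
  convert this using 2 with n
  rw [ENNReal.toReal_ofReal (by positivity)]
end

section
/- Let Z be a sequence in the unit disk with Σ_{a∈Z}(1−|a|²)² < ∞ and with no points in D(0,δ) for some δ > 0 (and 0 ∉ Z). Then the product Ψ_Z(z) = Π_{a∈Z} ā·((a−z)/(1−āz))·exp(1 − ā·((a−z)/(1−āz))) converges uniformly on compact subsets of ID to an analytic function whose zero set is exactly Z with the given multiplicities, and |Ψ_Z(0)| = Π_{a∈Z} |a|²·e^{1−|a|²} > 0. -/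
open Metric Filter Topology

/-- One factor of the product `Ψ_Z`: `ā·M_a(z)·exp(1 - ā·M_a(z))` with
`M_a(z) = (a-z)/(1-āz)`. -/
noncomputable def psifac (a z : ℂ) : ℂ :=
  (starRingEnd ℂ) a * ((a - z) / (1 - (starRingEnd ℂ) a * z)) *
    Complex.exp (1 - (starRingEnd ℂ) a * ((a - z) / (1 - (starRingEnd ℂ) a * z)))

open Finset

lemma prod_range_eq_one_add_sum (f : ℕ → ℂ) (m : ℕ) :
    ∏ n ∈ range m, f n = 1 + ∑ k ∈ range m, (∏ n ∈ range k, f n) * (f k - 1) := by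
  induction m with
  | zero => simp
  | succ m ih => rw [prod_range_succ, sum_range_succ, ih]; ring

lemma prod_norm_le (f : ℕ → ℂ) (u : ℕ → ℝ) (h : ∀ n, ‖f n - 1‖ ≤ u n) (k : ℕ) :
    ‖∏ n ∈ range k, f n‖ ≤ Real.exp (∑ n ∈ range k, u n) := by
  induction k with
  | zero => simp
  | succ k ih =>
      rw [prod_range_succ, sum_range_succ, norm_mul, Real.exp_add]
      have h1 : ‖f k‖ ≤ u k + 1 := by
        calc ‖f k‖ = ‖1 + (f k - 1)‖ := by ring_nf
        _ ≤ 1 + ‖f k - 1‖ := by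
            simpa using norm_add_le 1 (f k - 1)
        _ ≤ u k + 1 := by linarith [h k]
      have h2 : ‖f k‖ ≤ Real.exp (u k) := h1.trans (Real.add_one_le_exp _)
      exact mul_le_mul ih h2 (norm_nonneg _) (Real.exp_nonneg _)

lemma main_conv (g : ℕ → ℂ → ℂ) (s : Set ℂ) (u : ℕ → ℝ) (hu : Summable u)
    (hnn : ∀ n, 0 ≤ u n)
    (hbd : ∀ n, ∀ z ∈ s, ‖g n z - 1‖ ≤ u n) :
    TendstoUniformlyOn (fun m z => ∏ n ∈ range m, g n z)
      (fun z => 1 + ∑' k, (∏ n ∈ range k, g n z) * (g k z - 1)) atTop s ∧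
    ∀ z ∈ s, ‖(∑' k, (∏ n ∈ range k, g n z) * (g k z - 1))‖
      ≤ Real.exp (∑' n, u n) * ∑' n, u n := by
  set T := ∑' n, u n with hT
  have hTnn : 0 ≤ T := tsum_nonneg hnn
  set h : ℕ → ℂ → ℂ := fun k z => (∏ n ∈ range k, g n z) * (g k z - 1) with hh
  have hbound : ∀ k, ∀ z ∈ s, ‖h k z‖ ≤ Real.exp T * u k := by
    intro k z hz
    have h1 : ‖∏ n ∈ range k, g n z‖ ≤ Real.exp (∑ n ∈ range k, u n) :=
      prod_norm_le _ u (fun n => hbd n z hz) k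
    have h2 : ∑ n ∈ range k, u n ≤ T := Summable.sum_le_tsum _ (fun n _ => hnn n) hu
    calc ‖h k z‖ = ‖∏ n ∈ range k, g n z‖ * ‖g k z - 1‖ := by
          simp [hh, norm_mul]
      _ ≤ Real.exp T * u k := by
          apply mul_le_mul (h1.trans (Real.exp_le_exp.2 h2)) (hbd k z hz)
            (norm_nonneg _) (Real.exp_nonneg _)
  have husum : Summable (fun k => Real.exp T * u k) := hu.mul_left _
  have H := tendstoUniformlyOn_tsum_nat husum hbound
  constructor
  · have : (fun m z => ∏ n ∈ range m, g n z)
        = fun m z => (1 : ℂ) + ∑ k ∈ range m, h k z := by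
      funext m z; exact prod_range_eq_one_add_sum _ _
    rw [this]
    have hconst : TendstoUniformlyOn (fun (_ : ℕ) (_ : ℂ) => (1:ℂ)) (fun _ => 1) atTop s := by
      intro v hv
      filter_upwards with m z _
      exact refl_mem_uniformity hv
    exact hconst.add H
  · intro z hz
    have hs : Summable fun k => ‖h k z‖ :=
      Summable.of_nonneg_of_le (fun k => norm_nonneg _) (fun k => hbound k z hz) husum
    calc ‖∑' k, h k z‖ ≤ ∑' k, ‖h k z‖ := norm_tsum_le_tsum_norm hs
      _ ≤ ∑' k, Real.exp T * u k := Summable.tsum_le_tsum (fun k => hbound k z hz) hs husum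
      _ = Real.exp T * T := by rw [tsum_mul_left]

noncomputable def Cr (r : ℝ) : ℝ :=
  (3 + (1 + (1 - r)⁻¹) * Real.exp ((1 - r)⁻¹)) * (1 - r)⁻¹ ^ 2

lemma Cr_nonneg {r : ℝ} (hr : r < 1) : 0 ≤ Cr r := by
  have h1 : (0:ℝ) < 1 - r := by linarith
  have h2 : 0 ≤ (1 - r)⁻¹ := by positivity
  have := Real.exp_nonneg ((1 - r)⁻¹)
  unfold Cr; positivity

lemma denom_lb {a z : ℂ} {r : ℝ} (ha : ‖a‖ < 1)
    (hz : ‖z‖ ≤ r) :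
    1 - r ≤ ‖1 - (starRingEnd ℂ) a * z‖ := by
  have h1 : ‖(starRingEnd ℂ) a * z‖ ≤ r := by
    rw [norm_mul, Complex.norm_conj]
    calc ‖a‖ * ‖z‖ ≤ 1 * r :=
      mul_le_mul ha.le hz (norm_nonneg _) zero_le_one
    _ = r := one_mul r
  calc 1 - r ≤ ‖(1:ℂ)‖ - ‖(starRingEnd ℂ) a * z‖ := by
        rw [norm_one]; linarith
    _ ≤ ‖1 - (starRingEnd ℂ) a * z‖ := norm_sub_norm_le _ _
    _ = ‖1 - (starRingEnd ℂ) a * z‖ := rfl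

lemma psifac_eq {a z : ℂ} (hD : (1 - (starRingEnd ℂ) a * z) ≠ 0) :
    psifac a z = (1 - (((1 - ‖a‖ ^ 2 : ℝ) : ℂ) / (1 - (starRingEnd ℂ) a * z))) *
      Complex.exp ((((1 - ‖a‖ ^ 2 : ℝ) : ℂ) / (1 - (starRingEnd ℂ) a * z))) := by
  have key : (starRingEnd ℂ) a * ((a - z) / (1 - (starRingEnd ℂ) a * z))
      = 1 - (((1 - ‖a‖ ^ 2 : ℝ) : ℂ) / (1 - (starRingEnd ℂ) a * z)) := by
    have hca : (starRingEnd ℂ) a * a = ((‖a‖ ^ 2 : ℝ) : ℂ) := by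
      rw [mul_comm, Complex.mul_conj, Complex.normSq_eq_norm_sq]
    rw [eq_sub_iff_add_eq, ← mul_div_assoc, ← add_div, div_eq_one_iff_eq hD]
    push_cast at hca ⊢
    linear_combination hca
  rw [psifac, key]
  ring_nf

lemma psifac_bound {a z : ℂ} {r : ℝ} (ha : ‖a‖ < 1) (hr : r < 1)
    (hz : ‖z‖ ≤ r) :
    ‖psifac a z - 1‖ ≤ Cr r * (1 - ‖a‖ ^ 2) ^ 2 := by
  have hr0 : 0 ≤ r := (norm_nonneg z).trans hz
  have hd : 1 - r ≤ ‖1 - (starRingEnd ℂ) a * z‖ := denom_lb ha hz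
  have hdpos : (0:ℝ) < 1 - r := by linarith
  have hD : (1 - (starRingEnd ℂ) a * z) ≠ 0 := by
    intro h; rw [h] at hd; simp at hd; linarith
  set w : ℂ := (((1 - ‖a‖ ^ 2 : ℝ) : ℂ) / (1 - (starRingEnd ℂ) a * z)) with hw
  set W : ℝ := (1 - r)⁻¹ with hWdef
  have hWpos : 0 < W := by positivity
  have hanum : 0 ≤ 1 - ‖a‖ ^ 2 := by nlinarith [norm_nonneg a]
  have hanum1 : 1 - ‖a‖ ^ 2 ≤ 1 := by nlinarith [norm_nonneg a]
  have habsw : ‖w‖ ≤ (1 - ‖a‖ ^ 2) * W := by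
    rw [hw, norm_div, Complex.norm_real, Real.norm_eq_abs, abs_of_nonneg hanum]
    rw [div_le_iff₀ (by linarith)]
    calc 1 - ‖a‖ ^ 2 = (1 - ‖a‖ ^ 2) * W * (1-r) := by
          rw [hWdef]; field_simp
      _ ≤ (1 - ‖a‖ ^ 2) * W * ‖1 - (starRingEnd ℂ) a * z‖ := by
          apply mul_le_mul_of_nonneg_left hd; positivity
  have habsW : ‖w‖ ≤ W := by
    calc ‖w‖ ≤ (1 - ‖a‖ ^ 2) * W := habsw
      _ ≤ 1 * W := by apply mul_le_mul_of_nonneg_right hanum1 hWpos.le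
      _ = W := one_mul W
  rw [psifac_eq hD, ← hw]
  set x := ‖w‖ with hx
  have hx0 : 0 ≤ x := norm_nonneg w
  have key : ‖(1 - w) * Complex.exp w - 1‖
      ≤ (3 + (1 + W) * Real.exp W) * x ^ 2 := by
    by_cases hc : x ≤ 1
    · have e1 : (1 - w) * Complex.exp w - 1
          = (Complex.exp w - 1 - w) - w * (Complex.exp w - 1) := by ring
      have b1 : ‖Complex.exp w - 1 - w‖ ≤ x ^ 2 :=
        Complex.norm_exp_sub_one_sub_id_le hc
      have b2 : ‖Complex.exp w - 1‖ ≤ 2 * x :=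
        Complex.norm_exp_sub_one_le hc
      have b3 : ‖w * (Complex.exp w - 1)‖ ≤ x * (2 * x) := by
        rw [norm_mul]; exact mul_le_mul_of_nonneg_left b2 hx0
      have : ‖(1 - w) * Complex.exp w - 1‖
          ≤ x ^ 2 + x * (2 * x) := by
        rw [e1]
        exact (norm_sub_le _ _).trans (add_le_add b1 b3)
      have hWe : 0 ≤ (1 + W) * Real.exp W := by positivity
      nlinarith
    · push_neg at hc
      have b1 : ‖(1 - w) * Complex.exp w‖ ≤ (1 + W) * Real.exp W := by
        rw [norm_mul, Complex.norm_exp]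
        apply mul_le_mul _ _ (Real.exp_nonneg _) (by positivity)
        · calc ‖1 - w‖ ≤ ‖1‖ + ‖w‖ := norm_sub_le 1 w
            _ ≤ 1 + W := by simpa using habsW
        · exact Real.exp_le_exp.2 ((Complex.abs_re_le_norm w).trans' (le_abs_self _) |>.trans habsW)
      have : ‖(1 - w) * Complex.exp w - 1‖
          ≤ (1 + W) * Real.exp W + 1 :=
        (norm_sub_le _ _).trans (by simpa using add_le_add_right b1 1)
      have hx1 : 1 ≤ x ^ 2 := by nlinarith
      have hWe : 0 ≤ (1 + W) * Real.exp W := by positivity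
      nlinarith
  calc ‖(1 - w) * Complex.exp w - 1‖ ≤ (3 + (1 + W) * Real.exp W) * x ^ 2 := key
    _ ≤ (3 + (1 + W) * Real.exp W) * ((1 - ‖a‖ ^ 2) * W) ^ 2 := by
        apply mul_le_mul_of_nonneg_left _ (by positivity)
        exact pow_le_pow_left₀ hx0 habsw 2
    _ = Cr r * (1 - ‖a‖ ^ 2) ^ 2 := by rw [Cr]; ring

lemma psifac_differentiableAt {a z : ℂ} (ha : ‖a‖ < 1) (hz : ‖z‖ < 1) :
    DifferentiableAt ℂ (psifac a) z := by
  have hd : 1 - ‖z‖ ≤ ‖1 - (starRingEnd ℂ) a * z‖ := denom_lb ha le_rfl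
  have hD : (1 - (starRingEnd ℂ) a * z) ≠ 0 := by
    intro h; rw [h] at hd; simp at hd; linarith
  have h1 : DifferentiableAt ℂ
      (fun z => (starRingEnd ℂ) a * ((a - z) / (1 - (starRingEnd ℂ) a * z))) z := by
    apply DifferentiableAt.const_mul
    exact DifferentiableAt.div (by fun_prop) (by fun_prop) hD
  have h2 : DifferentiableAt ℂ
      (fun z => Complex.exp (1 - (starRingEnd ℂ) a * ((a - z) / (1 - (starRingEnd ℂ) a * z)))) z :=
    ((differentiableAt_const 1).sub h1).cexp
  have : psifac a = fun z => (starRingEnd ℂ) a * ((a - z) / (1 - (starRingEnd ℂ) a * z)) *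
      Complex.exp (1 - (starRingEnd ℂ) a * ((a - z) / (1 - (starRingEnd ℂ) a * z))) := rfl
  rw [this]
  exact h1.mul h2

theorem stmt11 (Z : ℕ → ℂ) (hZ : ∀ n, Z n ∈ ball (0:ℂ) 1)
    (hsum : Summable fun n => (1 - ‖Z n‖ ^ 2) ^ 2)
    (δ : ℝ) (hδ : 0 < δ) (hsep : ∀ n, δ ≤ ‖Z n‖) :
    ∃ F : ℂ → ℂ,
      (∀ K : Set ℂ, K ⊆ ball 0 1 → IsCompact K →
        TendstoUniformlyOn (fun m z => ∏ n ∈ Finset.range m, psifac (Z n) z) F atTop K)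
      ∧ DifferentiableOn ℂ F (ball 0 1)
      ∧ (∀ z ∈ ball (0:ℂ) 1, (F z = 0 ↔ ∃ n, Z n = z))
      ∧ ‖F 0‖
          = ∏' n, (‖Z n‖ ^ 2 * Real.exp (1 - ‖Z n‖ ^ 2))
      ∧ 0 < ‖F 0‖ := by
  classical
  have hZlt : ∀ n, ‖Z n‖ < 1 := by
    intro n
    simpa using mem_ball_zero_iff.mp (hZ n)
  set f : ℕ → ℂ → ℂ := fun n z => psifac (Z n) z with hf
  set F : ℂ → ℂ := fun z => 1 + ∑' k, (∏ n ∈ range k, f n z) * (f k z - 1) with hF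
  -- uniform convergence on closed balls
  have huc : ∀ r : ℝ, r < 1 →
      TendstoUniformlyOn (fun m z => ∏ n ∈ range m, f n z) F atTop (closedBall 0 r) := by
    intro r hr1
    have hu : Summable (fun n => Cr r * (1 - ‖Z n‖ ^ 2) ^ 2) := hsum.mul_left _
    have hnn : ∀ n, 0 ≤ Cr r * (1 - ‖Z n‖ ^ 2) ^ 2 :=
      fun n => mul_nonneg (Cr_nonneg hr1) (sq_nonneg _)
    have hbd : ∀ n, ∀ z ∈ closedBall (0:ℂ) r,
        ‖f n z - 1‖ ≤ Cr r * (1 - ‖Z n‖ ^ 2) ^ 2 := by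
      intro n z hz
      exact psifac_bound (hZlt n) hr1 (by simpa using mem_closedBall_zero_iff.mp hz)
    exact (main_conv f (closedBall 0 r) _ hu hnn hbd).1
  -- pointwise convergence on the open ball
  have hpt : ∀ z : ℂ, ‖z‖ < 1 →
      Tendsto (fun m => ∏ n ∈ range m, f n z) atTop (𝓝 (F z)) := by
    intro z hz
    exact (huc (‖z‖) hz).tendsto_at (mem_closedBall_zero_iff.mpr le_rfl)
  -- first conjunct
  have hKconv : ∀ K : Set ℂ, K ⊆ ball 0 1 → IsCompact K →
      TendstoUniformlyOn (fun m z => ∏ n ∈ range m, f n z) F atTop K := by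
    intro K hK hKc
    rcases K.eq_empty_or_nonempty with rfl | hne
    · exact tendstoUniformlyOn_empty
    · obtain ⟨x0, hx0K, hx0max⟩ := hKc.exists_isMaxOn hne continuous_norm.continuousOn
      have hr1 : ‖x0‖ < 1 := by simpa using mem_ball_zero_iff.mp (hK hx0K)
      refine (huc ‖x0‖ hr1).mono ?_
      intro z hz
      exact mem_closedBall_zero_iff.mpr (hx0max hz)
  -- nonvanishing of individual factors
  have hfac_ne : ∀ n z, ‖z‖ < 1 → Z n ≠ z → f n z ≠ 0 := by
    intro n z hz hne
    have hd : 1 - ‖z‖ ≤ ‖1 - (starRingEnd ℂ) (Z n) * z‖ :=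
      denom_lb (hZlt n) le_rfl
    have hD : (1 - (starRingEnd ℂ) (Z n) * z) ≠ 0 := by
      intro h; rw [h] at hd; simp at hd; linarith
    have hZn0 : Z n ≠ 0 := by
      intro h
      have := hsep n
      rw [h] at this; simp at this; linarith
    simp only [hf, psifac]
    apply mul_ne_zero
    apply mul_ne_zero
    · simpa using hZn0
    · exact div_ne_zero (sub_ne_zero.mpr hne) hD
    · exact Complex.exp_ne_zero _
  refine ⟨F, hKconv, ?_, ?_, ?_⟩
  · -- differentiability
    have hdiffm : ∀ m : ℕ, DifferentiableOn ℂ (fun z => ∏ n ∈ range m, f n z) (ball 0 1) := by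
      intro m
      induction m with
      | zero => simpa using differentiableOn_const (1:ℂ)
      | succ m ih =>
          simp only [prod_range_succ]
          exact ih.mul (fun z hz => (psifac_differentiableAt (hZlt m)
            (by simpa using mem_ball_zero_iff.mp hz)).differentiableWithinAt)
    have hlu : TendstoLocallyUniformlyOn (fun m z => ∏ n ∈ range m, f n z) F atTop (ball 0 1) := by
      rw [tendstoLocallyUniformlyOn_iff_forall_isCompact isOpen_ball]
      intro K hK hKc
      exact hKconv K hK hKc
    exact hlu.differentiableOn (Eventually.of_forall hdiffm) isOpen_ball
  · -- zero set
    intro z hz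
    have hzlt : ‖z‖ < 1 := by
      simpa using mem_ball_zero_iff.mp hz
    constructor
    · -- F z = 0 → ∃ n, Z n = z
      intro hFz
      by_contra hcon
      push_neg at hcon
      set r := ‖z‖ with hr
      -- tail sums tend to 0
      have hu : Summable (fun n => Cr r * (1 - ‖Z n‖ ^ 2) ^ 2) := hsum.mul_left _
      set u : ℕ → ℝ := fun n => Cr r * (1 - ‖Z n‖ ^ 2) ^ 2 with hudef
      have hnn : ∀ n, 0 ≤ u n := fun n => mul_nonneg (Cr_nonneg hzlt) (sq_nonneg _)
      have htail : Tendsto (fun N => ∑' k, u (k + N)) atTop (𝓝 0) := tendsto_sum_nat_add u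
      obtain ⟨N, hN⟩ := (htail.eventually (gt_mem_nhds (by norm_num : (0:ℝ) < 1/4))).exists
      set u' : ℕ → ℝ := fun k => u (k + N) with hu'def
      have hu' : Summable u' := by
        rw [hu'def, summable_nat_add_iff]
        exact hu
      have hnn' : ∀ k, 0 ≤ u' k := fun k => hnn _
      set g' : ℕ → ℂ → ℂ := fun k w => f (k + N) w with hg'def
      have hbd' : ∀ k, ∀ w ∈ closedBall (0:ℂ) r, ‖g' k w - 1‖ ≤ u' k := by
        intro k w hw
        exact psifac_bound (hZlt _) hzlt
          (by simpa using mem_closedBall_zero_iff.mp hw)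
      obtain ⟨hGconv, hGbd⟩ := main_conv g' (closedBall 0 r) u' hu' hnn' hbd'
      set G : ℂ → ℂ := fun w => 1 + ∑' k, (∏ n ∈ range k, g' n w) * (g' k w - 1) with hG
      have hzmem : z ∈ closedBall (0:ℂ) r := by
        simp [mem_closedBall_zero_iff, hr]
      -- bound on |G z - 1|
      have hT0 : 0 ≤ ∑' n, u' n := tsum_nonneg hnn'
      have hT4 : ∑' n, u' n < 1/4 := hN
      have hGz1 : ‖G z - 1‖ < 1 := by
        have h1 : ‖G z - 1‖ ≤ Real.exp (∑' n, u' n) * ∑' n, u' n := by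
          have := hGbd z hzmem
          simpa [hG] using this
        have h2 : Real.exp (∑' n, u' n) ≤ Real.exp 1 :=
          Real.exp_le_exp.2 (by linarith)
        have h3 := Real.exp_one_lt_d9
        calc ‖G z - 1‖ ≤ Real.exp (∑' n, u' n) * ∑' n, u' n := h1
          _ ≤ Real.exp 1 * ∑' n, u' n := mul_le_mul_of_nonneg_right h2 hT0
          _ < 1 := by nlinarith
      have hGz : G z ≠ 0 := by
        intro h
        rw [h] at hGz1
        simp at hGz1
      -- split F z
      have h1 : Tendsto (fun m => ∏ n ∈ range (m + N), f n z) atTop (𝓝 (F z)) :=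
        (hpt z hzlt).comp (tendsto_add_atTop_nat N)
      have heq : (fun m => ∏ n ∈ range (m + N), f n z)
          = fun m => (∏ n ∈ range N, f n z) * ∏ k ∈ range m, g' k z := by
        funext m
        rw [add_comm m N, prod_range_add]
        congr 1
        exact prod_congr rfl fun i _ => by rw [hg'def]; ring_nf
      have h2 : Tendsto (fun m => (∏ n ∈ range N, f n z) * ∏ k ∈ range m, g' k z)
          atTop (𝓝 ((∏ n ∈ range N, f n z) * G z)) :=
        (hGconv.tendsto_at hzmem).const_mul _
      have hsplit : F z = (∏ n ∈ range N, f n z) * G z := by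
        rw [heq] at h1
        exact tendsto_nhds_unique h1 h2
      rw [hFz] at hsplit
      rcases mul_eq_zero.mp hsplit.symm with h | h
      · obtain ⟨n, _, hn0⟩ := prod_eq_zero_iff.mp h
        exact hfac_ne n z hzlt (hcon n) hn0
      · exact hGz h
    · -- ∃ n, Z n = z → F z = 0
      rintro ⟨n, hn⟩
      have hfz : f n z = 0 := by
        simp [hf, psifac, hn]
      have hev : ∀ᶠ m in atTop, (∏ k ∈ range m, f k z) = 0 := by
        rw [eventually_atTop]
        exact ⟨n + 1, fun m hm =>
          prod_eq_zero (mem_range.mpr (lt_of_lt_of_le (Nat.lt_succ_self n) hm)) hfz⟩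
      exact tendsto_nhds_unique (hpt z hzlt) (tendsto_const_nhds.congr' (hev.mono fun m hm => hm.symm))
  · -- value at 0 and positivity
    set c : ℕ → ℝ := fun n => ‖Z n‖ ^ 2 * Real.exp (1 - ‖Z n‖ ^ 2) with hc
    have hxpos : ∀ n, 0 < ‖Z n‖ ^ 2 := by
      intro n
      have h1 : 0 < ‖Z n‖ := lt_of_lt_of_le hδ (hsep n)
      positivity
    have hc0 : ∀ n, 0 < c n := fun n => mul_pos (hxpos n) (Real.exp_pos _)
    set g : ℕ → ℝ := fun n => Real.log (c n) with hg
    have hglog : ∀ n, g n = Real.log (‖Z n‖ ^ 2) + (1 - ‖Z n‖ ^ 2) := by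
      intro n
      simp only [hg, hc]
      rw [Real.log_mul (ne_of_gt (hxpos n)) (ne_of_gt (Real.exp_pos _)), Real.log_exp]
    have hgb : ∀ n, |g n| ≤ (δ ^ 2)⁻¹ * (1 - ‖Z n‖ ^ 2) ^ 2 := by
      intro n
      set t := ‖Z n‖ ^ 2 with ht
      have ht0 : 0 < t := hxpos n
      have htδ : δ ^ 2 ≤ t := by
        have h1 := hsep n
        nlinarith [norm_nonneg (Z n)]
      have hδ2 : (0:ℝ) < δ ^ 2 := by positivity
      have hl1 : Real.log t ≤ t - 1 := Real.log_le_sub_one_of_pos ht0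
      have hl2 : Real.log t⁻¹ ≤ t⁻¹ - 1 := Real.log_le_sub_one_of_pos (by positivity)
      rw [Real.log_inv] at hl2
      rw [hglog n, ← ht, abs_le]
      constructor
      · -- lower bound
        have key : -(1 - t)^2 / t ≤ Real.log t + (1 - t) := by
          have h5 : t⁻¹ - 1 = (1 - t)/t := by field_simp
          have h6 : (1 - t) - (1 - t)/t = -(1-t)^2/t := by field_simp; ring
          rw [h5] at hl2
          linarith
        have h2 : (1 - t)^2 / t ≤ (1 - t)^2 / δ^2 :=
          div_le_div_of_nonneg_left (sq_nonneg _) hδ2 htδ |>.trans_eq rfl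
        have h3 : -((δ^2)⁻¹ * (1-t)^2) = -((1-t)^2/δ^2) := by field_simp
        calc -((δ^2)⁻¹ * (1-t)^2) = -((1-t)^2/δ^2) := h3
          _ ≤ -(1 - t)^2 / t := by rw [neg_div]; linarith
          _ ≤ Real.log t + (1 - t) := key
      · -- upper bound
        have : Real.log t + (1 - t) ≤ 0 := by linarith
        have h4 : 0 ≤ (δ^2)⁻¹ * (1-t)^2 := by positivity
        linarith
    have hgabs : Summable (fun n => |g n|) :=
      Summable.of_nonneg_of_le (fun n => abs_nonneg _) hgb (hsum.mul_left _)
    have hgsum : Summable g := hgabs.of_abs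
    set S := ∑' n, g n with hS
    -- partial products of c converge to exp S
    have hps : Tendsto (fun m => ∑ n ∈ range m, g n) atTop (𝓝 S) :=
      hgsum.hasSum.tendsto_sum_nat
    have hprodc : Tendsto (fun m => ∏ n ∈ range m, c n) atTop (𝓝 (Real.exp S)) := by
      have h1 : Tendsto (fun m => Real.exp (∑ n ∈ range m, g n)) atTop (𝓝 (Real.exp S)) :=
        (Real.continuous_exp.tendsto S).comp hps
      refine h1.congr fun m => ?_
      rw [Real.exp_sum]
      exact prod_congr rfl fun n _ => Real.exp_log (hc0 n)
    -- f n 0 is the real number c n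
    have hf0 : ∀ n, f n 0 = ((c n : ℝ) : ℂ) := by
      intro n
      have hca : (starRingEnd ℂ) (Z n) * Z n = ((‖Z n‖ ^ 2 : ℝ) : ℂ) := by
        rw [mul_comm, Complex.mul_conj, Complex.normSq_eq_norm_sq]
      simp only [hf, psifac, mul_zero, sub_zero, div_one]
      rw [hca, hc]
      push_cast
      ring
    have habsprod : ∀ m, ‖∏ n ∈ range m, f n 0‖ = ∏ n ∈ range m, c n := by
      intro m
      rw [show (∏ n ∈ range m, f n 0) = ((∏ n ∈ range m, c n : ℝ) : ℂ) by
        rw [Complex.ofReal_prod]; exact prod_congr rfl fun n _ => hf0 n]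
      rw [Complex.norm_real, Real.norm_eq_abs, abs_of_nonneg (prod_nonneg fun n _ => (hc0 n).le)]
    have habsF : Tendsto (fun m => ‖∏ n ∈ range m, f n 0‖) atTop
        (𝓝 (‖F 0‖)) :=
      (continuous_norm.tendsto _).comp (hpt 0 (by simp))
    have hF0 : ‖F 0‖ = Real.exp S := by
      refine tendsto_nhds_unique ?_ hprodc
      exact habsF.congr habsprod
    have hhp : HasProd c (Real.exp S) := by
      have h1 : Tendsto (fun s : Finset ℕ => Real.exp (∑ i ∈ s, g i)) atTop
          (𝓝 (Real.exp S)) := (Real.continuous_exp.tendsto S).comp hgsum.hasSum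
      refine h1.congr fun s => ?_
      rw [Real.exp_sum]
      exact prod_congr rfl fun n _ => Real.exp_log (hc0 n)
    refine ⟨?_, ?_⟩
    · rw [hF0, ← hhp.tprod_eq]
    · rw [hF0]; exact Real.exp_pos S
end
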